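/- Let n ≥ 3 be an integer and let W_n = (1/√n)·Σ_{u ∈ Bₙ¹} |u⟩ be the n-qubit W state, where Bₙ¹ is the set of strings in {0,1}ⁿ of Hamming weight 1. Let P₁ = Σ_{u∈Bₙ¹} |u⟩⟨u|, and let P₂ = Σ_{x∈{0,1}^{n−1}} |α_x⟩⟨α_x| ⊗ |β_x⟩⟨β_x|, where |α_x⟩ = 2^{-(n−1)/2} Σ_{y∈{0,1}^{n−1}} (−1)^{x·y} |y⟩ and |β_x⟩ = (|1⟩ + (n−1−2|x|)|0⟩)/√(1 + (n−1−2|x|)²). Then tr(P₁P₂) = n − 1 − (n−2)·h(n−1), where h(m) = 2^{-m} Σ_{j=0}^{m} C(m,j)/(1 + (m−2j)²). -/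

import Mathlib

open Matrix

noncomputable def h (n : ℕ) : ℝ :=
  (∑ j ∈ Finset.range (n + 1), (n.choose j : ℝ) / (1 + ((n : ℝ) - 2 * j) ^ 2)) / 2 ^ n

/-- Hamming weight of a bit string. -/
def wt {m : ℕ} (x : Fin m → Fin 2) : ℕ := ∑ i, (x i).val

/-- Basis index for `(ℂ²)^{⊗n}`, split as the first `n-1` qubits and the last qubit. -/
abbrev Idx (n : ℕ) := (Fin (n - 1) → Fin 2) × Fin 2

/-- The test projector `P₁` (Pauli-Z test for the W state). -/
def P1 (n : ℕ) : Matrix (Idx n) (Idx n) ℂ :=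
  fun p q => if p = q ∧ wt p.1 + (p.2 : ℕ) = 1 then 1 else 0

/-- The vector `|α_x⟩`. -/
noncomputable def alpha (n : ℕ) (x y : Fin (n - 1) → Fin 2) : ℂ :=
  (-1 : ℂ) ^ (∑ i, (x i : ℕ) * (y i : ℕ)) / (Real.sqrt (2 ^ (n - 1)) : ℝ)

/-- The vector `|β_x⟩`. -/
noncomputable def beta (n : ℕ) (x : Fin (n - 1) → Fin 2) (b : Fin 2) : ℂ :=
  (if b = 1 then 1 else ((n : ℂ) - 1 - 2 * (wt x : ℕ))) /
    (Real.sqrt (1 + ((n : ℝ) - 1 - 2 * (wt x : ℕ)) ^ 2) : ℝ)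

/-- The test projector `P₂ = Σ_x |α_x⟩⟨α_x| ⊗ |β_x⟩⟨β_x|`. -/
noncomputable def P2 (n : ℕ) : Matrix (Idx n) (Idx n) ℂ :=
  fun p q => ∑ x : Fin (n - 1) → Fin 2,
    alpha n x p.1 * star (alpha n x q.1) * (beta n x p.2 * star (beta n x q.2))

lemma fin2_val (b : Fin 2) : (b : ℕ) = if b = 1 then 1 else 0 := by fin_cases b <;> simp

lemma fin2_if (b : Fin 2) : (if b = 1 then (1 : Fin 2) else 0) = b := by fin_cases b <;> simp

lemma wt_eq_card {m : ℕ} (x : Fin m → Fin 2) :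
    wt x = (Finset.univ.filter (fun i => x i = 1)).card := by
  rw [Finset.card_filter, wt]
  exact Finset.sum_congr rfl fun i _ => fin2_val (x i)

lemma sum_wt {m : ℕ} {M : Type*} [AddCommMonoid M] (F : ℕ → M) :
    ∑ x : Fin m → Fin 2, F (wt x) = ∑ j ∈ Finset.range (m + 1), m.choose j • F j := by
  have key : ∑ x : Fin m → Fin 2, F (wt x)
      = ∑ s ∈ (Finset.univ : Finset (Fin m)).powerset, F s.card := by
    refine Finset.sum_nbij' (fun x => Finset.univ.filter (fun i => x i = 1))
      (fun s => fun i => if i ∈ s then 1 else 0) (by simp) (by simp) ?_ ?_ ?_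
    · intro x _
      funext i
      simpa using fin2_if (x i)
    · intro s _
      ext i
      simp
    · intro x _
      rw [wt_eq_card]
  rw [key, Finset.sum_powerset]
  refine Finset.sum_congr (by simp) fun j _ => ?_
  rw [Finset.sum_powersetCard j Finset.univ F, Finset.card_univ, Fintype.card_fin]

lemma alpha_mul (n : ℕ) (x y : Fin (n - 1) → Fin 2) :
    alpha n x y * star (alpha n x y) = ((1 / 2 ^ (n - 1) : ℝ) : ℂ) := by
  unfold alpha
  simp only [star_div₀, star_pow, star_neg, star_one, Complex.star_def, Complex.conj_ofReal]
  rw [div_mul_div_comm, ← Complex.ofReal_mul, Real.mul_self_sqrt (by positivity),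
    ← pow_add, Even.neg_one_pow ⟨_, rfl⟩]
  push_cast
  ring

lemma beta_mul (n : ℕ) (x : Fin (n - 1) → Fin 2) (b : Fin 2) :
    beta n x b * star (beta n x b) =
      (((if b = 1 then 1 else ((n : ℝ) - 1 - 2 * (wt x : ℕ)) ^ 2) /
        (1 + ((n : ℝ) - 1 - 2 * (wt x : ℕ)) ^ 2) : ℝ) : ℂ) := by
  unfold beta
  set c : ℝ := (n : ℝ) - 1 - 2 * (wt x : ℕ) with hc
  have hb : (if b = 1 then (1:ℂ) else ((n : ℂ) - 1 - 2 * (wt x : ℕ))) /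
      ((Real.sqrt (1 + c ^ 2) : ℝ) : ℂ)
      = (((if b = 1 then 1 else c) / Real.sqrt (1 + c ^ 2) : ℝ) : ℂ) := by
    rw [Complex.ofReal_div, apply_ite (fun r : ℝ => (r : ℂ))]
    congr 1
    split
    · norm_num
    · rw [hc]; push_cast; ring
  rw [hb, Complex.star_def, Complex.conj_ofReal, ← Complex.ofReal_mul]
  congr 1
  rw [div_mul_div_comm, Real.mul_self_sqrt (by positivity)]
  congr 1
  split <;> ring

theorem stmt_13 (n : ℕ) (hn : 3 ≤ n) :
    (P1 n * P2 n).trace = (n : ℂ) - 1 - ((n : ℂ) - 2) * (h (n - 1) : ℝ) := by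
  have hm1 : ((n - 1 : ℕ) : ℝ) = (n : ℝ) - 1 := by
    rw [Nat.cast_sub (by omega)]; norm_num
  -- the diagonal of P2
  have hdiag : ∀ p : Idx n, P2 n p p =
      ((∑ x : Fin (n - 1) → Fin 2, (1 / 2 ^ (n - 1) : ℝ) *
        ((if p.2 = 1 then 1 else ((n : ℝ) - 1 - 2 * (wt x : ℕ)) ^ 2) /
          (1 + ((n : ℝ) - 1 - 2 * (wt x : ℕ)) ^ 2)) : ℝ) : ℂ) := by
    intro p
    show (∑ x : Fin (n - 1) → Fin 2, _) = _
    rw [Complex.ofReal_sum]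
    exact Finset.sum_congr rfl fun x _ => by
      rw [alpha_mul, beta_mul, ← Complex.ofReal_mul]
  -- trace as a sum over weight-one diagonal entries
  have htr : (P1 n * P2 n).trace
      = ∑ p : Idx n, if wt p.1 + (p.2 : ℕ) = 1 then P2 n p p else 0 := by
    rw [Matrix.trace]
    refine Finset.sum_congr rfl fun p _ => ?_
    rw [Matrix.diag_apply, Matrix.mul_apply, Finset.sum_eq_single p]
    · simp only [P1, true_and, if_pos rfl]
      split <;> simp
    · intro q _ hq
      simp [P1, (Ne.symm hq : ¬ p = q)]
    · simp
  set v0 : ℝ := ∑ x : Fin (n - 1) → Fin 2, (1 / 2 ^ (n - 1) : ℝ) *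
      (((n : ℝ) - 1 - 2 * (wt x : ℕ)) ^ 2 / (1 + ((n : ℝ) - 1 - 2 * (wt x : ℕ)) ^ 2)) with hv0
  set v1 : ℝ := ∑ x : Fin (n - 1) → Fin 2, (1 / 2 ^ (n - 1) : ℝ) *
      (1 / (1 + ((n : ℝ) - 1 - 2 * (wt x : ℕ)) ^ 2)) with hv1
  -- counting lemmas
  have count1 : ∀ v : ℂ, ∑ y : Fin (n - 1) → Fin 2, (if wt y = 1 then v else 0)
      = ((n - 1 : ℕ) : ℂ) * v := by
    intro v
    rw [sum_wt (fun j => if j = 1 then v else 0),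
      Finset.sum_eq_single_of_mem 1 (Finset.mem_range.2 (by omega))]
    · simp [Nat.choose_one_right]
    · intro j _ hj
      simp [hj]
  have count0 : ∀ v : ℂ, ∑ y : Fin (n - 1) → Fin 2, (if wt y = 0 then v else 0) = v := by
    intro v
    rw [sum_wt (fun j => if j = 0 then v else 0),
      Finset.sum_eq_single_of_mem 0 (Finset.mem_range.2 (by omega))]
    · simp
    · intro j _ hj
      simp [hj]
  -- main reduction
  have main : (P1 n * P2 n).trace = ((n - 1 : ℕ) : ℂ) * (v0 : ℝ) + (v1 : ℝ) := by
    rw [htr, Fintype.sum_prod_type]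
    have step : ∀ y : Fin (n - 1) → Fin 2,
        (∑ b : Fin 2, if wt y + (b : ℕ) = 1 then P2 n (y, b) (y, b) else 0)
        = (if wt y = 1 then ((v0 : ℝ) : ℂ) else 0) + (if wt y = 0 then ((v1 : ℝ) : ℂ) else 0) := by
      intro y
      rw [Fin.sum_univ_two]
      congr 1
      · rw [hdiag (y, (0 : Fin 2))]
        norm_num [hv0]
      · rw [hdiag (y, (1 : Fin 2))]
        have : wt y + ((1 : Fin 2) : ℕ) = 1 ↔ wt y = 0 := by norm_num
        simp only [this]
        norm_num [hv1]
    rw [Finset.sum_congr rfl fun y _ => step y, Finset.sum_add_distrib, count1, count0]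
  -- evaluate v1
  have h2pos : (0:ℝ) < 2 ^ (n - 1) := by positivity
  have hG1 : v1 = h (n - 1) := by
    rw [hv1, sum_wt (fun j => (1 / 2 ^ (n - 1) : ℝ) * (1 / (1 + ((n : ℝ) - 1 - 2 * j) ^ 2)))]
    unfold h
    rw [Finset.sum_div]
    refine Finset.sum_congr rfl fun j _ => ?_
    have hpos : (0:ℝ) < 1 + ((n : ℝ) - 1 - 2 * j) ^ 2 := by positivity
    rw [hm1, nsmul_eq_mul]
    ring
  have hG0 : v0 = 1 - v1 := by
    rw [hv0, hv1]
    have step : ∀ x : Fin (n - 1) → Fin 2,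
        (1 / 2 ^ (n - 1) : ℝ) * (((n : ℝ) - 1 - 2 * (wt x : ℕ)) ^ 2 /
          (1 + ((n : ℝ) - 1 - 2 * (wt x : ℕ)) ^ 2))
        = (1 / 2 ^ (n - 1) : ℝ) - ((1 / 2 ^ (n - 1) : ℝ) *
          (1 / (1 + ((n : ℝ) - 1 - 2 * (wt x : ℕ)) ^ 2))) := by
      intro x
      have hpos : (0:ℝ) < 1 + ((n : ℝ) - 1 - 2 * (wt x : ℕ)) ^ 2 := by positivity
      field_simp
      ring
    rw [Finset.sum_congr rfl fun x _ => step x, Finset.sum_sub_distrib, Finset.sum_const,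
      Finset.card_univ]
    congr 1
    rw [nsmul_eq_mul]
    have hcard : (Fintype.card (Fin (n - 1) → Fin 2) : ℝ) = 2 ^ (n - 1) := by
      simp [Fintype.card_fun]
    rw [hcard]
    field_simp
  rw [main, hG0, hG1]
  rw [Nat.cast_sub (by omega : 1 ≤ n)]
  push_cast
  ring
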